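/- Let p be a prime, k a field of characteristic p, and A = k[x]/(x^p). Let (X^g)_{g∈G} be a connected grading of A by a group G, and suppose there exists an invertible homogeneous element a ∈ X^s with s ≠ 1. Then G is cyclic of order p, and the grading is fine: every homogeneous component X^g is one-dimensional (so the support equals G). -/

import Mathlib

set_option synthInstance.maxHeartbeats 400000
set_option maxHeartbeats 1000000

open Polynomial

private lemma stmt7.nontrivA {p : ℕ} {k : Type*} [Field k] (hp : p.Prime) :
    Nontrivial (Polynomial k ⧸ (Ideal.span {Polynomial.X ^ p} : Ideal (Polynomial k))) := by
  apply Ideal.Quotient.nontrivial_iff.mpr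
  rw [Ne, Ideal.span_singleton_eq_top]
  intro h
  exact Polynomial.not_isUnit_X ((isUnit_pow_iff hp.ne_zero).mp h)

private lemma stmt7.unit_pow {p : ℕ} {k : Type*} [Field k] (hp : p.Prime) (hchar : CharP k p)
    (a : Polynomial k ⧸ (Ideal.span {Polynomial.X ^ p} : Ideal (Polynomial k)))
    (haUnit : IsUnit a) :
    ∃ c : k, c ≠ 0 ∧ a ^ p = algebraMap k _ c := by
  haveI := stmt7.nontrivA (k := k) hp
  haveI : Fact p.Prime := ⟨hp⟩
  haveI : CharP (Polynomial k ⧸ (Ideal.span {Polynomial.X ^ p} : Ideal (Polynomial k))) p :=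
    charP_of_injective_algebraMap (algebraMap k _).injective p
  obtain ⟨f, rfl⟩ := Ideal.Quotient.mk_surjective a
  set c0 := f.coeff 0 with hc0
  obtain ⟨g, hg⟩ : (X : k[X]) ∣ (f - C c0) := X_dvd_iff.mpr (by simp [hc0])
  have hf : f = C c0 + X * g := by linear_combination hg
  have hm : (Ideal.Quotient.mk _ (X * g) :
      Polynomial k ⧸ (Ideal.span {Polynomial.X ^ p} : Ideal (Polynomial k))) ^ p = 0 := by
    rw [← map_pow, Ideal.Quotient.eq_zero_iff_mem, Ideal.mem_span_singleton]
    exact Dvd.intro (g ^ p) (by ring)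
  have key : (Ideal.Quotient.mk (Ideal.span {X ^ p} : Ideal k[X]) f) ^ p
      = algebraMap k _ (c0 ^ p) := by
    rw [hf, map_add, add_pow_char, hm, add_zero, ← map_pow, ← map_pow]
    rfl
  refine ⟨c0 ^ p, ?_, key⟩
  intro hc
  have : ((Ideal.Quotient.mk (Ideal.span {X ^ p} : Ideal k[X]) f) ^ p :
      Polynomial k ⧸ (Ideal.span {Polynomial.X ^ p} : Ideal (Polynomial k))) = 0 := by
    rw [key, hc, map_zero]
  exact (haUnit.pow p).ne_zero this

private lemma stmt7.finrank_le_mul {k : Type*} [Field k] {A : Type*} [CommRing A] [Algebra k A]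
    [FiniteDimensional k A] (P Q : Submodule k A) (u : A) (hu : IsUnit u)
    (h : ∀ x ∈ P, x * u ∈ Q) :
    Module.finrank k P ≤ Module.finrank k Q := by
  let f : P →ₗ[k] Q :=
    { toFun := fun x => ⟨x.1 * u, h x.1 x.2⟩
      map_add' := fun x y => Subtype.ext (add_mul _ _ _)
      map_smul' := fun c x => Subtype.ext (smul_mul_assoc c x.1 u) }
  have hf : Function.Injective f := by
    intro x y hxy
    have h2 := congrArg Subtype.val hxy
    exact Subtype.ext (hu.mul_left_injective h2)
  exact LinearMap.finrank_le_finrank_of_injective hf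

private abbrev stmt7.A (k : Type*) [Field k] (p : ℕ) :=
  Polynomial k ⧸ (Ideal.span {Polynomial.X ^ p} : Ideal (Polynomial k))

theorem stmt7 (p : ℕ) (hp : p.Prime) (k : Type*) [Field k] (hchar : CharP k p)
    (G : Type*) [Group G]
    (X : G → Submodule k (Polynomial k ⧸ (Ideal.span {Polynomial.X ^ p} : Ideal (Polynomial k))))
    (hind : iSupIndep X) (hsup : (⨆ g, X g) = ⊤)
    (hmul : ∀ g h, X g * X h ≤ X (g * h))
    (hconn : Subgroup.closure {g | X g ≠ ⊥} = ⊤)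
    (s : G) (hs : s ≠ 1)
    (a : Polynomial k ⧸ (Ideal.span {Polynomial.X ^ p} : Ideal (Polynomial k)))
    (ha : a ∈ X s) (haUnit : IsUnit a) :
    IsCyclic G ∧ Nat.card G = p ∧
    (∀ g, Module.finrank k (X g) = 1) ∧
    {g | X g ≠ ⊥} = Set.univ := by
  classical
  haveI hnt : Nontrivial (stmt7.A k p) := stmt7.nontrivA hp
  have hXpne : (Polynomial.X ^ p : k[X]) ≠ 0 := pow_ne_zero _ X_ne_zero
  haveI : FiniteDimensional k (stmt7.A k p) := Module.Finite.of_basis (AdjoinRoot.powerBasis hXpne).basis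
  have hdim : Module.finrank k (stmt7.A k p) = p := by
    have := (AdjoinRoot.powerBasis hXpne).finrank
    simp at this
    exact this
  have heqg : ∀ (g h : G) (x : stmt7.A k p), x ≠ 0 → x ∈ X g → x ∈ X h → g = h := by
    intro g h x hx hxg hxh
    by_contra hgh
    exact hx (Submodule.disjoint_def.mp (hind.pairwiseDisjoint hgh) x hxg hxh)
  obtain ⟨c, hc, hac⟩ := stmt7.unit_pow hp hchar a haUnit
  have hpow : ∀ n : ℕ, a ^ (n + 1) ∈ X (s ^ (n + 1)) := by
    intro n
    induction n with
    | zero => simpa using ha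
    | succ n ih =>
        rw [pow_succ a, pow_succ s]
        exact hmul _ _ (Submodule.mul_mem_mul ih ha)
  have hap : a ^ p ∈ X (s ^ p) := by
    obtain ⟨m, rfl⟩ : ∃ m, p = m + 1 := ⟨p - 1, (Nat.succ_pred_eq_of_pos hp.pos).symm⟩
    exact hpow m
  have h1sp : (1 : stmt7.A k p) ∈ X (s ^ p) := by
    have h1 : (1 : stmt7.A k p) = c⁻¹ • (a ^ p) := by
      rw [hac, Algebra.algebraMap_eq_smul_one, smul_smul, inv_mul_cancel₀ hc, one_smul]
    rw [h1]
    exact Submodule.smul_mem _ _ hap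
  have hsp : s ^ p = 1 := by
    have h2 : (1 : stmt7.A k p) ∈ X (s ^ p * s ^ p) := by
      have := hmul _ _ (Submodule.mul_mem_mul h1sp h1sp)
      simpa using this
    have h3 : s ^ p = s ^ p * s ^ p := heqg _ _ 1 one_ne_zero h1sp h2
    exact left_eq_mul.mp h3
  haveI : Fact p.Prime := ⟨hp⟩
  have hords : orderOf s = p := orderOf_eq_prime hsp hs
  have h1X : (1 : stmt7.A k p) ∈ X 1 := by rwa [hsp] at h1sp
  have hpow' : ∀ n : ℕ, a ^ n ∈ X (s ^ n) := by
    intro n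
    cases n with
    | zero => simpa using h1X
    | succ n => exact hpow n
  -- support contained in zpowers of s
  have hsub : {g | X g ≠ ⊥} ⊆ (Subgroup.zpowers s : Set G) := by
    intro g hg
    by_contra hgz
    obtain ⟨w, hw, hw0⟩ := Submodule.exists_mem_ne_zero_of_ne_bot hg
    set F : Fin p ⊕ Unit → G := Sum.elim (fun i => s ^ (i : ℕ)) (fun _ => g) with hF
    have hFinj : Function.Injective F := by
      rintro (i | i) (j | j) hij
      · refine congrArg Sum.inl (Fin.ext ?_)
        refine pow_injOn_Iio_orderOf ?_ ?_ hij
        · simpa [hords] using i.2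
        · simpa [hords] using j.2
      · simp only [F, Sum.elim_inl, Sum.elim_inr] at hij
        exact absurd (hij ▸ Subgroup.npow_mem_zpowers s i) hgz
      · simp only [F, Sum.elim_inl, Sum.elim_inr] at hij
        exact absurd (hij.symm ▸ Subgroup.npow_mem_zpowers s j) hgz
      · exact congrArg Sum.inr (Subsingleton.elim _ _)
    have hli : LinearIndependent k (Sum.elim (fun i : Fin p => a ^ (i : ℕ)) fun _ : Unit => w) := by
      refine iSupIndep.linearIndependent _ (hind.comp hFinj) ?_ ?_
      · rintro (i | i)
        · exact hpow' i
        · exact hw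
      · rintro (i | i)
        · exact (haUnit.pow _).ne_zero
        · exact hw0
    have hcard := hli.fintype_card_le_finrank
    rw [hdim, Fintype.card_sum, Fintype.card_fin] at hcard
    simp at hcard
  have hzt : Subgroup.zpowers s = ⊤ :=
    eq_top_iff.mpr (hconn ▸ (Subgroup.closure_le _).mpr hsub)
  have hmemz : ∀ x : G, x ∈ Subgroup.zpowers s := fun x => by rw [hzt]; trivial
  have hcyc : IsCyclic G := ⟨s, hmemz⟩
  have hcardG : Nat.card G = p := by
    rw [← hords, ← Nat.card_zpowers s, hzt, Subgroup.card_top]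
  haveI : Finite G := Nat.finite_of_card_ne_zero (by rw [hcardG]; exact hp.ne_zero)
  have hrep : ∀ g : G, ∃ n : ℕ, g = s ^ n := by
    intro g
    obtain ⟨n, hn⟩ := mem_powers_iff_mem_zpowers.mpr (hmemz g)
    exact ⟨n, hn.symm⟩
  -- all components have the same dimension
  have hainv : a ^ (p - 1) ∈ X s⁻¹ := by
    have h1 := hpow' (p - 1)
    have h2 : s ^ (p - 1) = s⁻¹ := by
      apply eq_inv_of_mul_eq_one_left
      rw [← pow_succ, Nat.sub_add_cancel (Nat.one_le_of_lt hp.one_lt), hsp]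
    rwa [h2] at h1
  have hfr : ∀ g : G, Module.finrank k (X (g * s)) = Module.finrank k (X g) := by
    intro g
    refine le_antisymm ?_ ?_
    · have := stmt7.finrank_le_mul (X (g * s)) (X (g * s * s⁻¹)) (a ^ (p - 1)) (haUnit.pow _)
        (fun x hx => hmul _ _ (Submodule.mul_mem_mul hx hainv))
      rwa [mul_inv_cancel_right] at this
    · exact stmt7.finrank_le_mul (X g) (X (g * s)) a haUnit
        (fun x hx => hmul _ _ (Submodule.mul_mem_mul hx ha))
  have hfr1 : ∀ n : ℕ, Module.finrank k (X (s ^ n)) = Module.finrank k (X 1) := by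
    intro n
    induction n with
    | zero => rw [pow_zero]
    | succ n ih => rw [pow_succ, hfr, ih]
  have hfrall : ∀ g : G, Module.finrank k (X g) = Module.finrank k (X 1) := by
    intro g
    obtain ⟨n, rfl⟩ := hrep g
    exact hfr1 n
  -- the sum of dimensions is p
  haveI : Fintype G := Fintype.ofFinite G
  have hinternal : DirectSum.IsInternal X :=
    DirectSum.isInternal_submodule_of_iSupIndep_of_iSup_eq_top hind hsup
  have hsum : ∑ g : G, Module.finrank k (X g) = p := by
    have e : (DirectSum G fun g => X g) ≃ₗ[k] (stmt7.A k p) :=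
      LinearEquiv.ofBijective (DirectSum.coeLinearMap X) hinternal
    rw [← Module.finrank_directSum, e.finrank_eq, hdim]
  have hd1 : Module.finrank k (X 1) = 1 := by
    have hfc : Fintype.card G = p := by rw [← Nat.card_eq_fintype_card, hcardG]
    have hsum2 : p * Module.finrank k (X 1) = p * 1 := by
      calc p * Module.finrank k (X 1)
          = ∑ _g : G, Module.finrank k (X 1) := by
            rw [Finset.sum_const, Finset.card_univ, hfc, smul_eq_mul]
        _ = ∑ g : G, Module.finrank k (X g) :=
            Finset.sum_congr rfl (fun g _ => (hfrall g).symm)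
        _ = p * 1 := by rw [hsum, mul_one]
    exact Nat.eq_of_mul_eq_mul_left hp.pos hsum2
  refine ⟨hcyc, hcardG, fun g => (hfrall g).trans hd1, ?_⟩
  · ext g
    simp only [Set.mem_setOf_eq, Set.mem_univ, iff_true]
    obtain ⟨n, rfl⟩ := hrep g
    exact Submodule.ne_bot_iff _ |>.mpr ⟨a ^ n, hpow' n, (haUnit.pow n).ne_zero⟩
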